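/- Let S_λ be a weighted shift on a directed tree 𝒯 = (V, E) with weights λ = {λ_v}_{v ∈ V°}, and let u, w ∈ V be such that Chi(u) = {w} and λ_w ≠ 0. Suppose u is a Stieltjes vertex with respect to S_λ. Then w is a Stieltjes vertex with respect to S_λ, and the map μ ↦ ρ_μ defined by ρ_μ(σ) = |λ_w|² ∫_σ (1/s) dμ(s) + (1 − |λ_w|² ∫_0^∞ (1/s) dμ(s)) δ₀(σ) for Borel σ ⊆ [0, ∞) is a bijection from M_w^b(λ) onto M_u(λ), whose inverse is the map ρ ↦ μ_ρ given by μ_ρ(σ) = |λ_w|^{−2} ∫_σ s dρ(s). Here M_w^b(λ) is the set of all representing measures μ of {‖S_λⁿ e_w‖²}_{n=0}^∞ such that ∫_0^∞ (1/s) dμ(s) ≤ 1/|λ_w|², M_u(λ) is the set of all representing measures of {‖S_λⁿ e_u‖²}_{n=0}^∞, and δ₀ is the Dirac measure at 0 on [0, ∞). -/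

import Mathlib

open MeasureTheory ENNReal Set
open scoped Classical

noncomputable section

universe u

/-! ### Stieltjes moment sequences -/

/-- `μ` is a representing measure of the sequence `t`, i.e. a positive Borel measure on `[0,∞)`
(modelled as a Borel measure on `ℝ` vanishing on `(-∞,0)`) such that `∫_0^∞ sⁿ dμ(s) = t n`
for all `n`. -/
def IsRepMeasure (μ : Measure ℝ) (t : ℕ → ℝ) : Prop :=
  μ (Set.Iio 0) = 0 ∧ ∀ n : ℕ, ∫⁻ s, ENNReal.ofReal s ^ n ∂μ = ENNReal.ofReal (t n)

/-- `t` is a Stieltjes moment sequence. -/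
def IsStieltjesMomentSeq (t : ℕ → ℝ) : Prop :=
  (∀ n, 0 ≤ t n) ∧ ∃ μ : Measure ℝ, IsRepMeasure μ t

/-- `t` is a determinate Stieltjes moment sequence: it has exactly one representing measure. -/
def IsDeterminateStieltjes (t : ℕ → ℝ) : Prop :=
  (∀ n, 0 ≤ t n) ∧ ∃! μ : Measure ℝ, IsRepMeasure μ t

/-- a Borel probability measure on `[0,∞)` -/
def IsProbOnRplus (μ : Measure ℝ) : Prop := IsProbabilityMeasure μ ∧ μ (Set.Iio 0) = 0

/-! ### Unbounded operators -/

section Op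

variable {H : Type*} [NormedAddCommGroup H] [InnerProductSpace ℂ H]

/-- Apply a partially defined operator, with junk value `0` outside of the domain. -/
def pApply (S : H →ₗ.[ℂ] H) (x : H) : H := if h : x ∈ S.domain then S ⟨x, h⟩ else 0

/-- `x ∈ D^∞(S)`. -/
def MemDomInf (S : H →ₗ.[ℂ] H) (x : H) : Prop := ∀ n : ℕ, (pApply S)^[n] x ∈ S.domain

/-- The graph of the composition `A ∘ B` of two partially defined operators. -/
def graphComp (A B : H →ₗ.[ℂ] H) : Set (H × H) :=
  {p | ∃ y, (p.1, y) ∈ B.graph ∧ (y, p.2) ∈ A.graph}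

/-- A normal (unbounded) operator: closed, densely defined, and `N* N = N N*`
(as an equality of the graphs of the compositions). -/
def IsNormalOp {K : Type*} [NormedAddCommGroup K] [InnerProductSpace ℂ K] [CompleteSpace K]
    (N : K →ₗ.[ℂ] K) : Prop :=
  Dense (N.domain : Set K) ∧ N.IsClosed ∧
    graphComp N.adjoint N = graphComp N N.adjoint

/-- A densely defined operator `S` in a complex Hilbert space `H` is subnormal if there are a
complex Hilbert space `K`, an isometric embedding `J : H → K` and a normal operator `N` in `K`
extending `J ∘ S ∘ J⁻¹`. -/
def Subnormal {H : Type u} [NormedAddCommGroup H] [InnerProductSpace ℂ H]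
    (S : H →ₗ.[ℂ] H) : Prop :=
  Dense (S.domain : Set H) ∧
    ∃ (K : Type u) (_ : NormedAddCommGroup K) (_ : InnerProductSpace ℂ K) (_ : CompleteSpace K)
      (J : H →ₗᵢ[ℂ] K) (N : K →ₗ.[ℂ] K), IsNormalOp N ∧
        ∀ x : S.domain, ∃ hx : J x ∈ N.domain, N ⟨J x, hx⟩ = J (S x)

/-- `F` is a core of the operator `S`. -/
def IsCore (S : H →ₗ.[ℂ] H) (F : Submodule ℂ H) : Prop :=
  (F : Set H) ⊆ (S.domain : Set H) ∧
    (S.graph : Set (H × H)) ⊆ closure {p : H × H | p.1 ∈ F ∧ p.2 = pApply S p.1}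

end Op

/-! ### ℓ²-spaces and weighted shifts -/

instance : Fact ((1 : ℝ≥0∞) ≤ 2) := ⟨one_le_two⟩

/-- `ℓ²(V)`. -/
abbrev L2 (V : Type*) := lp (fun _ : V => ℂ) 2

section Shift

variable {V : Type*}

/-- the standard basis vector `e_u`, as a function on `V` -/
def eV (u : V) : V → ℂ := fun v => if v = u then 1 else 0

/-- The formal weighted-shift action determined by a partial "parent" function `p` and a weight
function `w` : `(Λ f)(v) = w v * f (parent of v)` if `v` has a parent, and `0` otherwise. -/
def lamOf (p : V → Option V) (w : V → ℂ) : (V → ℂ) →ₗ[ℂ] (V → ℂ) where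
  toFun f v := ((p v).map fun u => w v * f u).getD 0
  map_add' f g := by funext v; cases h : p v <;> simp [h, mul_add]
  map_smul' c f := by funext v; cases h : p v <;> simp [h]; ring

/-- `‖S^n e_u‖²` for the weighted shift with formal action `L`. -/
def momSeqL (L : (V → ℂ) →ₗ[ℂ] (V → ℂ)) (u : V) (n : ℕ) : ℝ :=
  ∑' v, ‖(⇑L)^[n] (eV u) v‖ ^ 2

/-- `e_u ∈ D^∞(S)` for the weighted shift with formal action `L`. -/
def eMemDomInf (L : (V → ℂ) →ₗ[ℂ] (V → ℂ)) (u : V) : Prop :=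
  ∀ n : ℕ, Memℓp ((⇑L)^[n] (eV u)) 2

/-- The (in general unbounded) operator in `ℓ²(V)` associated with the formal action `L`,
with its natural domain `{f ∈ ℓ²(V) : L f ∈ ℓ²(V)}`. -/
def pmOf (L : (V → ℂ) →ₗ[ℂ] (V → ℂ)) : L2 V →ₗ.[ℂ] L2 V where
  domain :=
    { carrier := {f : L2 V | Memℓp (L ⇑f) 2}
      add_mem' := by
        intro f g hf hg
        have h2 : L ⇑(f + g) = L ⇑f + L ⇑g := by
          rw [lp.coeFn_add, map_add]
        simpa only [Set.mem_setOf_eq, h2] using hf.add hg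
      zero_mem' := by
        have h2 : L ⇑(0 : L2 V) = 0 := by rw [lp.coeFn_zero, map_zero]
        simp only [Set.mem_setOf_eq, h2]
        exact zero_memℓp
      smul_mem' := by
        intro c f hf
        have h2 : L ⇑(c • f) = c • L ⇑f := by
          rw [lp.coeFn_smul, _root_.map_smul]
        simpa only [Set.mem_setOf_eq, h2] using hf.const_smul c }
  toFun :=
    { toFun := fun f => (⟨L ⇑(f : L2 V), f.2⟩ : L2 V)
      map_add' := by
        intro f g
        apply Subtype.ext
        have h2 : L ⇑((f : L2 V) + (g : L2 V)) = L ⇑(f : L2 V) + L ⇑(g : L2 V) := by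
          rw [lp.coeFn_add, map_add]
        simp only [Submodule.coe_add]
        rw [h2]
        rfl
      map_smul' := by
        intro c f
        apply Subtype.ext
        have h2 : L ⇑(c • (f : L2 V)) = c • L ⇑(f : L2 V) := by
          rw [lp.coeFn_smul, _root_.map_smul]
        simp only [Submodule.coe_smul]
        rw [h2]
        rfl }

end Shift
/-! ### Directed trees -/

/-- A directed tree: a directed graph which is connected (as an undirected graph), has no
circuits, and in which every vertex has at most one parent. -/
structure DirTree (V : Type*) where
  edge : V → V → Prop
  connected : ∀ u v : V, Relation.ReflTransGen (fun a b => edge a b ∨ edge b a) u v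
  noCircuit : ∀ v : V, ¬ Relation.TransGen edge v v
  uniqueParent : ∀ ⦃u₁ u₂ v : V⦄, edge u₁ v → edge u₂ v → u₁ = u₂

namespace DirTree

variable {V : Type*} (T : DirTree V)

/-- `v ∈ V°`, i.e. `v` is not a root. -/
def HasParent (v : V) : Prop := ∃ u, T.edge u v

/-- The parent of `v`, as an `Option`-valued function. -/
noncomputable def parOpt (v : V) : Option V :=
  if h : T.HasParent v then some h.choose else none

/-- The parent of `v` (junk value `v` itself if `v` is a root). -/
noncomputable def par (v : V) : V := (T.parOpt v).getD v

/-- The set of children of `u`. -/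
def Chi (u : V) : Set V := {v | T.edge u v}

/-- The set of descendants of `u`. -/
def Des (u : V) : Set V := {w | ∃ n : ℕ, T.par^[n] w = u}

/-- The formal action `Λ_T` of the weighted shift on `T` with weights `w`. -/
noncomputable def lamT (w : V → ℂ) : (V → ℂ) →ₗ[ℂ] (V → ℂ) := lamOf T.parOpt w

/-- The weighted shift `S_λ` on the directed tree `T`, as an unbounded operator in `ℓ²(V)`. -/
noncomputable def shift (w : V → ℂ) : L2 V →ₗ.[ℂ] L2 V := pmOf (T.lamT w)

/-- `u` is a Stieltjes vertex with respect to the weighted shift on `T` with weights `w`. -/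
noncomputable def StieltjesVertex (w : V → ℂ) (u : V) : Prop :=
  eMemDomInf (T.lamT w) u ∧ IsStieltjesMomentSeq (momSeqL (T.lamT w) u)

/-- The parent function of the subtree induced on a subset `A ⊆ V` : the parent of `v ∈ A`
inside `A`, if it exists. -/
noncomputable def parOptSub (A : Set V) (v : A) : Option A :=
  match T.parOpt v.1 with
  | none => none
  | some u => if h : u ∈ A then some ⟨u, h⟩ else none

/-- The restriction `S_λ|_{ℓ²(A)}` of a weighted shift to the (invariant) subspace `ℓ²(A)`,
regarded as an operator in the Hilbert space `ℓ²(A)`. -/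
noncomputable def shiftRes (w : V → ℂ) (A : Set V) : L2 A →ₗ.[ℂ] L2 A :=
  pmOf (lamOf (T.parOptSub A) fun v => w v.1)

end DirTree

/-! ### Classical weighted shifts -/

/-- parent function for the directed tree `(ℤ₊, {(n, n+1)})` of the unilateral shift -/
def uniPar : ℕ → Option ℕ
  | 0 => none
  | n + 1 => some n

/-- the formal action of the unilateral weighted shift: `(Λ f)(n+1) = λ_{n+1} f(n)`. -/
def uniLam (lam : ℕ → ℂ) : (ℕ → ℂ) →ₗ[ℂ] (ℕ → ℂ) := lamOf uniPar lam

/-- parent function for the directed tree `(ℤ, {(n, n+1)})` of the bilateral shift -/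
def bilPar : ℤ → Option ℤ := fun n => some (n - 1)

/-- the formal action of the bilateral weighted shift: `(Λ f)(n) = λ_n f(n-1)`. -/
def bilLam (lam : ℤ → ℂ) : (ℤ → ℂ) →ₗ[ℂ] (ℤ → ℂ) := lamOf bilPar lam

/-- `t` is a two-sided Stieltjes moment sequence: there is a positive Borel measure on `(0,∞)`
with `∫ sⁿ dμ = t n` for all `n ∈ ℤ`. -/
def IsTwoSidedStieltjesMomentSeq (t : ℤ → ℝ) : Prop :=
  (∀ n, 0 ≤ t n) ∧ ∃ μ : Measure ℝ,
    μ (Set.Iic 0) = 0 ∧ ∀ n : ℤ, ∫⁻ s, ENNReal.ofReal s ^ n ∂μ = ENNReal.ofReal (t n)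

/-! ### The directed trees `𝒯_{η,κ}` -/

/-- `J_ι = {k ∈ ℕ : 1 ≤ k ≤ ι}`, as a type. -/
abbrev Jt (ι : ℕ∞) := {k : ℕ // 1 ≤ k ∧ (k : ℕ∞) ≤ ι}

/-- The vertex set `V_{η,κ}` of the directed tree `𝒯_{η,κ}` :
`Sum.inl ⟨m, _⟩` is the vertex `-m` (for `m ∈ ℕ`, `m ≤ κ`) and `Sum.inr (i, j)` is the vertex
`(i, j)` (for `i ∈ J_η`, `j ≥ 1`). -/
abbrev VT (η κ : ℕ∞) := {m : ℕ // (m : ℕ∞) ≤ κ} ⊕ (Jt η × {j : ℕ // 1 ≤ j})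

/-- The parent function of the tree `𝒯_{η,κ}` : the parent of `-m` is `-(m+1)` (if `m+1 ≤ κ`;
the vertex `-κ` is the root), the parent of `(i,1)` is `0`, and the parent of `(i,j+1)`
is `(i,j)`. -/
def parEK (η κ : ℕ∞) : VT η κ → Option (VT η κ)
  | .inl ⟨m, _⟩ =>
      if h : ((m + 1 : ℕ) : ℕ∞) ≤ κ then some (.inl ⟨m + 1, h⟩) else none
  | .inr (i, ⟨j, _⟩) =>
      if h : 2 ≤ j then some (.inr (i, ⟨j - 1, by omega⟩))
      else some (.inl ⟨0, zero_le⟩)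

/-- The weight attached to a vertex of `𝒯_{η,κ}` : `lamC m` is the weight `λ_{-m}` and
`lamB i j` is the weight `λ_{i,j}`. -/
def wtEK {η κ : ℕ∞} (lamC : ℕ → ℂ) (lamB : Jt η → ℕ → ℂ) : VT η κ → ℂ
  | .inl ⟨m, _⟩ => lamC m
  | .inr (i, ⟨j, _⟩) => lamB i j

/-- The formal action of the weighted shift on `𝒯_{η,κ}` with weights `λ_{-m} = lamC m`,
`λ_{i,j} = lamB i j`. -/
def ekLam (η κ : ℕ∞) (lamC : ℕ → ℂ) (lamB : Jt η → ℕ → ℂ) :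
    (VT η κ → ℂ) →ₗ[ℂ] (VT η κ → ℂ) := lamOf (parEK η κ) (wtEK lamC lamB)

/-- The weighted shift `S_λ` on `𝒯_{η,κ}`, as an unbounded operator in `ℓ²(V_{η,κ})`. -/
def ekShift (η κ : ℕ∞) (lamC : ℕ → ℂ) (lamB : Jt η → ℕ → ℂ) :
    L2 (VT η κ) →ₗ.[ℂ] L2 (VT η κ) := pmOf (ekLam η κ lamC lamB)

/-- The branching vertex `0` of `𝒯_{η,κ}`. -/
def v0 (η κ : ℕ∞) : VT η κ := Sum.inl ⟨0, zero_le⟩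

/-- The vertex `-m` of `𝒯_{η,κ}`. -/
def vC (η : ℕ∞) {κ : ℕ∞} (m : ℕ) (hm : (m : ℕ∞) ≤ κ) : VT η κ := Sum.inl ⟨m, hm⟩

/-- The vertex `(i, j)` of `𝒯_{η,κ}`. -/
def vB {η : ℕ∞} (κ : ℕ∞) (i : Jt η) (j : ℕ) (hj : 1 ≤ j) : VT η κ := Sum.inr (i, ⟨j, hj⟩)

/-- The nonzero-weights condition for `𝒯_{η,κ}` : all weights attached to non-root vertices
are nonzero. -/
def ekNonzero (η κ : ℕ∞) (lamC : ℕ → ℂ) (lamB : Jt η → ℕ → ℂ) : Prop :=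
  (∀ m : ℕ, ((m + 1 : ℕ) : ℕ∞) ≤ κ → lamC m ≠ 0) ∧ ∀ (i : Jt η) (j : ℕ), 1 ≤ j → lamB i j ≠ 0

/-- `∫_0^∞ s^{-m} dμ(s)` (with values in `[0,∞]`, and the convention `0⁻¹ = ∞`). -/
def invMom (μ : Measure ℝ) (m : ℕ) : ℝ≥0∞ := ∫⁻ s, (ENNReal.ofReal s ^ m)⁻¹ ∂μ

/-- `∫_σ s^{-m} dμ(s)`. -/
def invMomOn (μ : Measure ℝ) (m : ℕ) (σ : Set ℝ) : ℝ≥0∞ := ∫⁻ s in σ, (ENNReal.ofReal s ^ m)⁻¹ ∂μ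

/-- `∫_0^∞ sⁿ dμ(s)`. -/
def powMom (μ : Measure ℝ) (n : ℕ) : ℝ≥0∞ := ∫⁻ s, ENNReal.ofReal s ^ n ∂μ

/-- `∫_σ sⁿ dμ(s)`. -/
def powMomOn (μ : Measure ℝ) (n : ℕ) (σ : Set ℝ) : ℝ≥0∞ := ∫⁻ s in σ, ENNReal.ofReal s ^ n ∂μ

/-- `|z|²` as an extended nonnegative real. -/
def nsq (z : ℂ) : ℝ≥0∞ := ENNReal.ofReal (‖z‖ ^ 2)

/-- `∑_{i ∈ J_η} |λ_{i,1}|² ∫_0^∞ s^{-m} dμ_i(s)`. -/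
def branchSum (η : ℕ∞) (lamB : Jt η → ℕ → ℂ) (μ : Jt η → Measure ℝ) (m : ℕ) : ℝ≥0∞ :=
  ∑' i : Jt η, nsq (lamB i 1) * invMom (μ i) m

/-- `∑_{i ∈ J_η} |λ_{i,1}|² ∫_σ s^{-m} dμ_i(s)`. -/
def branchSumOn (η : ℕ∞) (lamB : Jt η → ℕ → ℂ) (μ : Jt η → Measure ℝ) (m : ℕ) (σ : Set ℝ) :
    ℝ≥0∞ :=
  ∑' i : Jt η, nsq (lamB i 1) * invMomOn (μ i) m σ

/-- `{μ_i}_{i ∈ J_η}` is a system of Borel probability measures on `[0,∞)` satisfying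
`∫_0^∞ sⁿ dμ_i(s) = |λ_{i,2} ⋯ λ_{i,n+1}|²` for all `n ≥ 1` (condition (3.1) of the theorem). -/
def ekMomCond (η : ℕ∞) (lamB : Jt η → ℕ → ℂ) (μ : Jt η → Measure ℝ) : Prop :=
  (∀ i, IsProbOnRplus (μ i)) ∧
    ∀ (i : Jt η) (n : ℕ), 1 ≤ n →
      powMom (μ i) n = ENNReal.ofReal (‖∏ j ∈ Finset.Icc 2 (n + 1), lamB i j‖ ^ 2)

/-- `|λ_0 λ_{-1} ⋯ λ_{-(l-1)}|²` as an extended nonnegative real. -/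
def chainProdSq (lamC : ℕ → ℂ) (l : ℕ) : ℝ≥0∞ := nsq (∏ j ∈ Finset.range l, lamC j)

/-- The sequence `n ↦ ∑_{i ∈ J_η} |λ_{i,1} ⋯ λ_{i,n+1}|²` (which equals `‖S_λ^{n+1} e_0‖²`). -/
def ekBaseSeq (η : ℕ∞) (lamB : Jt η → ℕ → ℂ) (n : ℕ) : ℝ :=
  ∑' i : Jt η, ‖∏ j ∈ Finset.Icc 1 (n + 1), lamB i j‖ ^ 2

/-- The set of children of a vertex of `𝒯_{η,κ}`. -/
def ekChi (η κ : ℕ∞) (u : VT η κ) : Set (VT η κ) := {v | parEK η κ v = some u}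


/-! ### Auxiliary lemmas -/

section Aux

variable {V : Type} (T : DirTree V)

lemma parOpt_eq_some_iff {p v : V} : T.parOpt v = some p ↔ T.edge p v := by
  unfold DirTree.parOpt
  constructor
  · intro h
    split at h
    · next hp =>
      obtain rfl : hp.choose = p := by simpa using h
      exact hp.choose_spec
    · simp at h
  · intro h
    have hp : T.HasParent v := ⟨p, h⟩
    rw [dif_pos hp]
    exact congrArg some (T.uniqueParent hp.choose_spec h)

lemma lamT_eV {lam : V → ℂ} {u w : V} (hchi : T.Chi u = {w}) :
    T.lamT lam (eV u) = lam w • eV w := by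
  have hedge : ∀ v, T.edge u v ↔ v = w := by
    intro v
    constructor
    · intro h
      have : v ∈ T.Chi u := h
      rw [hchi] at this; exact this
    · intro h
      subst h
      have : v ∈ T.Chi u := by rw [hchi]; rfl
      exact this
  funext v
  show ((T.parOpt v).map fun p => lam v * eV u p).getD 0 = (lam w • eV w) v
  by_cases hvw : v = w
  · subst hvw
    have : T.parOpt v = some u := (parOpt_eq_some_iff T).2 ((hedge v).2 rfl)
    simp [this, eV, Pi.smul_apply, smul_eq_mul]
  · have h0 : (lam w • eV w) v = 0 := by simp [eV, hvw]
    rw [h0]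
    cases h : T.parOpt v with
    | none => simp
    | some p =>
      have hpv : T.edge p v := (parOpt_eq_some_iff T).1 h
      have hpu : p ≠ u := by
        intro hp; subst hp
        exact hvw ((hedge v).1 hpv)
      simp [eV, hpu]

lemma iter_smul (L : (V → ℂ) →ₗ[ℂ] (V → ℂ)) (c : ℂ) (f : V → ℂ) (n : ℕ) :
    (⇑L)^[n] (c • f) = c • (⇑L)^[n] f := by
  induction n generalizing f with
  | zero => simp
  | succ n ih =>
    rw [Function.iterate_succ_apply, L.map_smul, Function.iterate_succ_apply]
    exact ih (L f)

lemma momSeqL_zero (L : (V → ℂ) →ₗ[ℂ] (V → ℂ)) (u : V) : momSeqL L u 0 = 1 := by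
  unfold momSeqL
  simp only [Function.iterate_zero, id_eq]
  rw [tsum_eq_single u (by intro v hv; simp [eV, hv])]
  simp [eV]

lemma momSeqL_nonneg (L : (V → ℂ) →ₗ[ℂ] (V → ℂ)) (u : V) (n : ℕ) : 0 ≤ momSeqL L u n :=
  tsum_nonneg fun v => by positivity

lemma momSeqL_succ {lam : V → ℂ} {u w : V} (hchi : T.Chi u = {w}) (n : ℕ) :
    momSeqL (T.lamT lam) u (n + 1) = ‖lam w‖ ^ 2 * momSeqL (T.lamT lam) w n := by
  unfold momSeqL
  have h1 : (⇑(T.lamT lam))^[n + 1] (eV u) = lam w • (⇑(T.lamT lam))^[n] (eV w) := by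
    rw [Function.iterate_succ_apply, lamT_eV T hchi, iter_smul]
  rw [h1, ← tsum_mul_left]
  congr 1
  funext v
  simp [Pi.smul_apply, norm_smul, mul_pow]

end Aux

section MeasAux

variable {c : ℝ≥0∞} {tu tw : ℕ → ℝ}

lemma meas_g : Measurable fun s : ℝ => c⁻¹ * ENNReal.ofReal s :=
  ENNReal.measurable_ofReal.const_mul _

lemma meas_f : Measurable fun s : ℝ => c * (ENNReal.ofReal s)⁻¹ :=
  ENNReal.measurable_ofReal.inv.const_mul _

lemma meas_pow (n : ℕ) : Measurable fun s : ℝ => ENNReal.ofReal s ^ n :=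
  ENNReal.measurable_ofReal.pow_const n

lemma repMeasure_univ {ρ : Measure ℝ} (hρ : IsRepMeasure ρ tu) (h0 : tu 0 = 1) :
    ρ Set.univ = 1 := by
  have h := hρ.2 0
  simp only [pow_zero, lintegral_one, h0, ENNReal.ofReal_one] at h
  exact h

lemma zero_null_of_invMom_ne_top {μ : Measure ℝ} (h : invMom μ 1 ≠ ∞) : μ {0} = 0 := by
  by_contra h0
  apply h
  refine top_le_iff.1 ?_
  calc (∞ : ℝ≥0∞) = ∞ * μ {0} := (ENNReal.top_mul h0).symm
    _ = ∫⁻ _ in {0}, ∞ ∂μ := by rw [setLIntegral_const]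
    _ = ∫⁻ s in {0}, (ENNReal.ofReal s ^ 1)⁻¹ ∂μ := by
        refine setLIntegral_congr_fun (measurableSet_singleton 0) ?_
        intro s hs
        rw [Set.mem_singleton_iff] at hs
        subst hs
        simp
    _ ≤ invMom μ 1 := setLIntegral_le_lintegral _ _

lemma ae_pos_of_null {μ : Measure ℝ} (h0 : μ {0} = 0) (hneg : μ (Set.Iio 0) = 0) :
    ∀ᵐ s ∂μ, 0 < s := by
  rw [ae_iff]
  have : μ (Set.Iic 0) = 0 := by
    rw [← Set.Iio_union_right]
    exact measure_union_null hneg h0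
  simp only [not_lt]
  exact this

lemma bwd_mem (hc0 : c ≠ 0) (hctop : c ≠ ∞) (htw : ∀ n, 0 ≤ tw n) (hu0 : tu 0 = 1)
    (hrel : ∀ n, ENNReal.ofReal (tu (n + 1)) = c * ENNReal.ofReal (tw n))
    {ρ : Measure ℝ} (hρ : IsRepMeasure ρ tu) :
    IsRepMeasure (ρ.withDensity fun s => c⁻¹ * ENNReal.ofReal s) tw ∧
      invMom (ρ.withDensity fun s => c⁻¹ * ENNReal.ofReal s) 1 ≤ c⁻¹ := by
  refine ⟨⟨?_, ?_⟩, ?_⟩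
  · rw [withDensity_apply _ measurableSet_Iio]
    exact setLIntegral_measure_zero _ _ hρ.1
  · intro n
    rw [lintegral_withDensity_eq_lintegral_mul ρ meas_g (meas_pow n)]
    have heq : ((fun s : ℝ => c⁻¹ * ENNReal.ofReal s) * fun s => ENNReal.ofReal s ^ n) =
        fun s : ℝ => c⁻¹ * ENNReal.ofReal s ^ (n + 1) := by
      funext s
      simp only [Pi.mul_apply, pow_succ']
      ring
    rw [heq, lintegral_const_mul _ (meas_pow (n + 1)), hρ.2 (n + 1), hrel n, ← mul_assoc,
      ENNReal.inv_mul_cancel hc0 hctop, one_mul]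
  · unfold invMom
    rw [lintegral_withDensity_eq_lintegral_mul ρ meas_g
      (show Measurable fun s : ℝ => (ENNReal.ofReal s ^ 1)⁻¹ from (meas_pow 1).inv)]
    calc ∫⁻ s, ((fun s : ℝ => c⁻¹ * ENNReal.ofReal s) * fun s => (ENNReal.ofReal s ^ 1)⁻¹) s ∂ρ
        ≤ ∫⁻ _, c⁻¹ ∂ρ := by
          refine lintegral_mono fun s => ?_
          simp only [Pi.mul_apply, pow_one, mul_assoc]
          exact mul_le_of_le_one_right' (ENNReal.mul_inv_le_one _)
      _ = c⁻¹ := by rw [lintegral_const, repMeasure_univ hρ hu0, mul_one]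

lemma fwd_mem (hc0 : c ≠ 0) (hctop : c ≠ ∞) (hu0 : tu 0 = 1)
    (hrel : ∀ n, ENNReal.ofReal (tu (n + 1)) = c * ENNReal.ofReal (tw n))
    {μ : Measure ℝ} (hμ : IsRepMeasure μ tw) (hI : invMom μ 1 ≤ c⁻¹) :
    IsRepMeasure
      (μ.withDensity (fun s => c * (ENNReal.ofReal s)⁻¹) +
        (1 - c * invMom μ 1) • Measure.dirac (0 : ℝ)) tu := by
  have hctop' : c⁻¹ ≠ ∞ := ENNReal.inv_ne_top.2 hc0
  have hInot : invMom μ 1 ≠ ∞ := ne_top_of_le_ne_top hctop' hI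
  have h0 : μ {0} = 0 := zero_null_of_invMom_ne_top hInot
  have hpos : ∀ᵐ s ∂μ, 0 < s := ae_pos_of_null h0 hμ.1
  have hcI : c * invMom μ 1 ≤ 1 := by
    calc c * invMom μ 1 ≤ c * c⁻¹ := mul_le_mul_right hI c
      _ = 1 := ENNReal.mul_inv_cancel hc0 hctop
  have hwd : ∫⁻ s, c * (ENNReal.ofReal s)⁻¹ ∂μ = c * invMom μ 1 := by
    rw [lintegral_const_mul _
      (show Measurable fun s : ℝ => (ENNReal.ofReal s)⁻¹ from ENNReal.measurable_ofReal.inv)]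
    unfold invMom
    simp [pow_one]
  constructor
  · rw [Measure.add_apply, Measure.smul_apply, withDensity_apply _ measurableSet_Iio,
      setLIntegral_measure_zero _ _ hμ.1, Measure.dirac_apply' _ measurableSet_Iio]
    simp
  · intro n
    rw [lintegral_add_measure, lintegral_smul_measure,
      lintegral_dirac' _ (meas_pow n),
      lintegral_withDensity_eq_lintegral_mul μ meas_f (meas_pow n)]
    cases n with
    | zero =>
      simp only [pow_zero, ENNReal.ofReal_zero, mul_one, hu0, ENNReal.ofReal_one]
      have : ((fun s : ℝ => c * (ENNReal.ofReal s)⁻¹) * fun _ => 1) =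
          fun s : ℝ => c * (ENNReal.ofReal s)⁻¹ := by funext s; simp
      rw [this, hwd, smul_eq_mul, mul_one, add_tsub_cancel_of_le hcI]
    | succ n =>
      have hd : (0 : ℝ≥0∞) ^ (n + 1) = 0 := zero_pow (Nat.succ_ne_zero n)
      rw [ENNReal.ofReal_zero, hd, smul_zero, add_zero]
      have hcongr : (fun s : ℝ => ((fun s : ℝ => c * (ENNReal.ofReal s)⁻¹) *
          fun s => ENNReal.ofReal s ^ (n + 1)) s) =ᵐ[μ] fun s => c * ENNReal.ofReal s ^ n := by
        filter_upwards [hpos] with s hs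
        have hx : ENNReal.ofReal s ≠ 0 := by
          simp [ENNReal.ofReal_eq_zero, not_le, hs]
        simp only [Pi.mul_apply, pow_succ']
        rw [mul_assoc, ← mul_assoc (ENNReal.ofReal s)⁻¹, ENNReal.inv_mul_cancel hx
          ENNReal.ofReal_ne_top, one_mul]
      rw [lintegral_congr_ae hcongr, lintegral_const_mul _ (meas_pow n), hμ.2 n, ← hrel n]

lemma left_inv_aux (hc0 : c ≠ 0) (hctop : c ≠ ∞)
    {μ : Measure ℝ} (hμ : IsRepMeasure μ tw) (hI : invMom μ 1 ≤ c⁻¹) :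
    (μ.withDensity (fun s => c * (ENNReal.ofReal s)⁻¹) +
        (1 - c * invMom μ 1) • Measure.dirac (0 : ℝ)).withDensity
      (fun s => c⁻¹ * ENNReal.ofReal s) = μ := by
  have hctop' : c⁻¹ ≠ ∞ := ENNReal.inv_ne_top.2 hc0
  have hInot : invMom μ 1 ≠ ∞ := ne_top_of_le_ne_top hctop' hI
  have h0 : μ {0} = 0 := zero_null_of_invMom_ne_top hInot
  have hpos : ∀ᵐ s ∂μ, 0 < s := ae_pos_of_null h0 hμ.1
  rw [withDensity_add_measure]
  have hdirac : ((1 - c * invMom μ 1) • Measure.dirac (0 : ℝ)).withDensity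
      (fun s => c⁻¹ * ENNReal.ofReal s) = 0 := by
    refine Measure.measure_univ_eq_zero.1 ?_
    rw [withDensity_apply _ MeasurableSet.univ, Measure.restrict_univ, lintegral_smul_measure,
      lintegral_dirac' _ meas_g]
    simp
  rw [hdirac, add_zero, ← withDensity_mul _ meas_f meas_g]
  have hcongr : ((fun s : ℝ => c * (ENNReal.ofReal s)⁻¹) * fun s => c⁻¹ * ENNReal.ofReal s)
      =ᵐ[μ] 1 := by
    filter_upwards [hpos] with s hs
    have hx : ENNReal.ofReal s ≠ 0 := by simp [ENNReal.ofReal_eq_zero, not_le, hs]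
    simp only [Pi.mul_apply, Pi.one_apply]
    rw [mul_mul_mul_comm, ENNReal.mul_inv_cancel hc0 hctop,
      ENNReal.inv_mul_cancel hx ENNReal.ofReal_ne_top, one_mul]
  rw [withDensity_congr_ae hcongr, withDensity_one]

lemma right_inv_aux (hc0 : c ≠ 0) (hctop : c ≠ ∞) (hu0 : tu 0 = 1)
    {ρ : Measure ℝ} (hρ : IsRepMeasure ρ tu) :
    (ρ.withDensity fun s => c⁻¹ * ENNReal.ofReal s).withDensity
        (fun s => c * (ENNReal.ofReal s)⁻¹) +
      (1 - c * invMom (ρ.withDensity fun s => c⁻¹ * ENNReal.ofReal s) 1) •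
        Measure.dirac (0 : ℝ) = ρ := by
  have h1 : (ρ.withDensity fun s => c⁻¹ * ENNReal.ofReal s).withDensity
      (fun s => c * (ENNReal.ofReal s)⁻¹) = ρ.restrict (Set.Ioi 0) := by
    rw [← withDensity_mul _ meas_g meas_f]
    have : ((fun s : ℝ => c⁻¹ * ENNReal.ofReal s) * fun s => c * (ENNReal.ofReal s)⁻¹) =
        (Set.Ioi (0 : ℝ)).indicator 1 := by
      funext s
      by_cases hs : 0 < s
      · have hx : ENNReal.ofReal s ≠ 0 := by simp [ENNReal.ofReal_eq_zero, not_le, hs]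
        rw [Set.indicator_of_mem (show s ∈ Set.Ioi 0 from hs)]
        simp only [Pi.mul_apply, Pi.one_apply]
        rw [mul_mul_mul_comm, ENNReal.inv_mul_cancel hc0 hctop,
          ENNReal.mul_inv_cancel hx ENNReal.ofReal_ne_top, one_mul]
      · rw [Set.indicator_of_notMem (show s ∉ Set.Ioi 0 from hs)]
        have hx : ENNReal.ofReal s = 0 := ENNReal.ofReal_eq_zero.2 (not_lt.1 hs)
        simp [hx]
    rw [this, withDensity_indicator_one measurableSet_Ioi]
  have h2 : invMom (ρ.withDensity fun s => c⁻¹ * ENNReal.ofReal s) 1 = c⁻¹ * ρ (Set.Ioi 0) := by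
    unfold invMom
    rw [lintegral_withDensity_eq_lintegral_mul ρ meas_g
      (show Measurable fun s : ℝ => (ENNReal.ofReal s ^ 1)⁻¹ from (meas_pow 1).inv)]
    have : ((fun s : ℝ => c⁻¹ * ENNReal.ofReal s) * fun s => (ENNReal.ofReal s ^ 1)⁻¹) =
        fun s => c⁻¹ * (Set.Ioi (0 : ℝ)).indicator 1 s := by
      funext s
      by_cases hs : 0 < s
      · have hx : ENNReal.ofReal s ≠ 0 := by simp [ENNReal.ofReal_eq_zero, not_le, hs]
        rw [Set.indicator_of_mem (show s ∈ Set.Ioi 0 from hs)]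
        simp only [Pi.mul_apply, pow_one, Pi.one_apply, mul_one, mul_assoc]
        rw [ENNReal.mul_inv_cancel hx ENNReal.ofReal_ne_top, mul_one]
      · rw [Set.indicator_of_notMem (show s ∉ Set.Ioi 0 from hs)]
        have hx : ENNReal.ofReal s = 0 := ENNReal.ofReal_eq_zero.2 (not_lt.1 hs)
        simp [hx]
    rw [this, lintegral_const_mul _ (measurable_one.indicator measurableSet_Ioi),
      lintegral_indicator_one measurableSet_Ioi]
  have huniv : ρ Set.univ = 1 := repMeasure_univ hρ hu0
  have h4 : ρ (Set.Ici 0) = 1 := by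
    rw [← Set.compl_Iio, measure_compl measurableSet_Iio (by rw [hρ.1]; exact ENNReal.zero_ne_top), hρ.1, huniv, tsub_zero]
  have hsplit : (1 : ℝ≥0∞) = ρ {0} + ρ (Set.Ioi 0) := by
    rw [← h4, ← Set.Ioi_union_left,
      measure_union (by simp) (measurableSet_singleton 0), add_comm]
  have hmne : ρ (Set.Ioi 0) ≠ ∞ := by
    intro h
    rw [h] at hsplit
    simp at hsplit
  have hm : 1 - c * invMom (ρ.withDensity fun s => c⁻¹ * ENNReal.ofReal s) 1 = ρ {0} := by
    rw [h2, ← mul_assoc, ENNReal.mul_inv_cancel hc0 hctop, one_mul]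
    exact ENNReal.sub_eq_of_eq_add hmne hsplit
  have hdirac : ρ {0} • Measure.dirac (0 : ℝ) = ρ.restrict {0} := by
    ext s hs
    rw [Measure.smul_apply, smul_eq_mul, Measure.dirac_apply' _ hs, Measure.restrict_apply hs]
    by_cases h0s : (0 : ℝ) ∈ s
    · rw [Set.indicator_of_mem h0s, Pi.one_apply, mul_one,
        Set.inter_eq_right.2 (Set.singleton_subset_iff.2 h0s)]
    · rw [Set.indicator_of_notMem h0s, mul_zero,
        (Set.inter_singleton_eq_empty.2 h0s), measure_empty]
  rw [h1, hm, hdirac, ← Measure.restrict_union (by simp) (measurableSet_singleton 0),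
    Set.Ioi_union_left]
  refine Measure.restrict_eq_self_of_ae_mem ?_
  rw [ae_iff]
  have : {x : ℝ | ¬ x ∈ Set.Ici 0} = Set.Iio 0 := by
    ext x; simp [not_le]
  rw [this, hρ.1]

end MeasAux

/-- Lemma 2(i). -/
theorem weightedShift_singleChild_repMeasure_bijOn
    {V : Type} (T : DirTree V) (lam : V → ℂ) (u w : V)
    (hchi : T.Chi u = {w}) (hw : lam w ≠ 0)
    (hu : T.StieltjesVertex lam u) :
    T.StieltjesVertex lam w ∧
      Set.BijOn
        (fun μ : Measure ℝ =>
          μ.withDensity (fun s => nsq (lam w) * (ENNReal.ofReal s)⁻¹) +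
            (1 - nsq (lam w) * invMom μ 1) • Measure.dirac (0 : ℝ))
        {μ : Measure ℝ | IsRepMeasure μ (momSeqL (T.lamT lam) w) ∧
          invMom μ 1 ≤ (nsq (lam w))⁻¹}
        {ρ : Measure ℝ | IsRepMeasure ρ (momSeqL (T.lamT lam) u)} ∧
      Set.InvOn
        (fun ρ : Measure ℝ => ρ.withDensity fun s => (nsq (lam w))⁻¹ * ENNReal.ofReal s)
        (fun μ : Measure ℝ =>
          μ.withDensity (fun s => nsq (lam w) * (ENNReal.ofReal s)⁻¹) +
            (1 - nsq (lam w) * invMom μ 1) • Measure.dirac (0 : ℝ))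
        {μ : Measure ℝ | IsRepMeasure μ (momSeqL (T.lamT lam) w) ∧
          invMom μ 1 ≤ (nsq (lam w))⁻¹}
        {ρ : Measure ℝ | IsRepMeasure ρ (momSeqL (T.lamT lam) u)} := by
  have hc0 : nsq (lam w) ≠ 0 := by
    simp only [nsq, Ne, ENNReal.ofReal_eq_zero, not_le]
    exact pow_pos (norm_pos_iff.2 hw) 2
  have hctop : nsq (lam w) ≠ ∞ := ENNReal.ofReal_ne_top
  have hu0 : momSeqL (T.lamT lam) u 0 = 1 := momSeqL_zero _ _
  have hrel : ∀ n, ENNReal.ofReal (momSeqL (T.lamT lam) u (n + 1)) =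
      nsq (lam w) * ENNReal.ofReal (momSeqL (T.lamT lam) w n) := by
    intro n
    rw [momSeqL_succ T hchi n, ENNReal.ofReal_mul (by positivity)]
    rfl
  have hmemw : eMemDomInf (T.lamT lam) w := by
    intro n
    have h1 := hu.1 (n + 1)
    rw [Function.iterate_succ_apply, lamT_eV T hchi, iter_smul] at h1
    have h2 := h1.const_smul (lam w)⁻¹
    rwa [smul_smul, inv_mul_cancel₀ hw, one_smul] at h2
  obtain ⟨hnn, ρ₀, hρ₀⟩ := hu.2
  have hMfwd : Set.MapsTo
      (fun μ : Measure ℝ =>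
        μ.withDensity (fun s => nsq (lam w) * (ENNReal.ofReal s)⁻¹) +
          (1 - nsq (lam w) * invMom μ 1) • Measure.dirac (0 : ℝ))
      {μ : Measure ℝ | IsRepMeasure μ (momSeqL (T.lamT lam) w) ∧
        invMom μ 1 ≤ (nsq (lam w))⁻¹}
      {ρ : Measure ℝ | IsRepMeasure ρ (momSeqL (T.lamT lam) u)} :=
    fun μ hμ => fwd_mem hc0 hctop hu0 hrel hμ.1 hμ.2
  have hMbwd : Set.MapsTo
      (fun ρ : Measure ℝ => ρ.withDensity fun s => (nsq (lam w))⁻¹ * ENNReal.ofReal s)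
      {ρ : Measure ℝ | IsRepMeasure ρ (momSeqL (T.lamT lam) u)}
      {μ : Measure ℝ | IsRepMeasure μ (momSeqL (T.lamT lam) w) ∧
        invMom μ 1 ≤ (nsq (lam w))⁻¹} :=
    fun ρ hρ => bwd_mem hc0 hctop (momSeqL_nonneg _ _) hu0 hrel hρ
  have hInv : Set.InvOn
      (fun ρ : Measure ℝ => ρ.withDensity fun s => (nsq (lam w))⁻¹ * ENNReal.ofReal s)
      (fun μ : Measure ℝ =>
        μ.withDensity (fun s => nsq (lam w) * (ENNReal.ofReal s)⁻¹) +
          (1 - nsq (lam w) * invMom μ 1) • Measure.dirac (0 : ℝ))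
      {μ : Measure ℝ | IsRepMeasure μ (momSeqL (T.lamT lam) w) ∧
        invMom μ 1 ≤ (nsq (lam w))⁻¹}
      {ρ : Measure ℝ | IsRepMeasure ρ (momSeqL (T.lamT lam) u)} :=
    ⟨fun μ hμ => left_inv_aux hc0 hctop hμ.1 hμ.2,
      fun ρ hρ => right_inv_aux hc0 hctop hu0 hρ⟩
  exact ⟨⟨hmemw, momSeqL_nonneg _ _, _,
      (bwd_mem hc0 hctop (momSeqL_nonneg _ _) hu0 hrel hρ₀).1⟩,
    hInv.bijOn hMfwd hMbwd, hInv⟩
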